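/- Define endomorphisms f_j of V^{⊗j} recursively by f₁ = id_{ℂ²}, f₂ = id_{ℂ²⊗ℂ²} + (1/2)·(coev ∘ ev + e), and f_{j+1} = (f_j ⊗ id) + (f_j ⊗ id) ∘ (id^{⊗(j−1)} ⊗ (coev ∘ ev)) ∘ (f_j ⊗ id) for j ≥ 2. Then for every j ≥ 1: f_j is a nonzero idempotent (f_j ∘ f_j = f_j), f_j is Dic∞-equivariant, the image of f_j is exactly the subspace V_j spanned by v₁^{⊗j} and v₂^{⊗j}, and the simple representation V_j occurs in V^{⊗j} with multiplicity one, i.e. dim_ℂ Hom_{Dic∞}(V_j, V^{⊗j}) = 1. -/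

import Mathlib

open scoped TensorProduct
open Matrix

noncomputable section

/-- `ℂ²`, the standard two-dimensional complex vector space. -/
abbrev V2 : Type := Fin 2 → ℂ

/-- The standard representation of a subgroup `G ≤ GL₂(ℂ)` on `ℂ²`, by matrix-vector
multiplication. -/
def stdRep (G : Subgroup (GL (Fin 2) ℂ)) : Representation ℂ G V2 where
  toFun g := Matrix.toLin' ((g : GL (Fin 2) ℂ) : Matrix (Fin 2) (Fin 2) ℂ)
  map_one' := by
    simp only [OneMemClass.coe_one, Units.val_one, Matrix.toLin'_one]
    rfl
  map_mul' g h := by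
    simp only [MulMemClass.coe_mul, Units.val_mul, Matrix.toLin'_mul]
    rfl

/-- `TPow j` is the `(j+1)`-st tensor power `V^{⊗(j+1)}` of `V = ℂ²`, realized as an
iterated binary tensor product (bundled as an object of `ModuleCat ℂ` so that the
recursion carries its module structure). -/
def TPow : ℕ → ModuleCat ℂ
  | 0 => ModuleCat.of ℂ V2
  | (j + 1) => ModuleCat.of ℂ (TPow j ⊗[ℂ] V2)

/-- The diagonal representation of `G ≤ GL₂(ℂ)` on `TPow j = V^{⊗(j+1)}`. -/
def TPowRep (G : Subgroup (GL (Fin 2) ℂ)) : (j : ℕ) → Representation ℂ G (TPow j)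
  | 0 => stdRep G
  | (j + 1) => (TPowRep G j).tprod (stdRep G)

/-- The basis vector `v_s^{⊗(j+1)}` of `TPow j = V^{⊗(j+1)}`, for `s : Fin 2`. -/
def vpow (s : Fin 2) : (j : ℕ) → TPow j
  | 0 => Pi.single s 1
  | (j + 1) => vpow s j ⊗ₜ[ℂ] Pi.single s 1

/-- The subspace `V_{j+1}` of `V^{⊗(j+1)}` spanned by `v₁^{⊗(j+1)}` and `v₂^{⊗(j+1)}`. -/
def Vsub (j : ℕ) : Submodule ℂ (TPow j) := Submodule.span ℂ {vpow 0 j, vpow 1 j}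

/-- The standard basis vectors `v₁ = bv 0`, `v₂ = bv 1` of `ℂ²`. -/
def bv (s : Fin 2) : V2 := Pi.single s 1

/-- The evaluation map `ev : ℂ²⊗ℂ² → ℂ`, determined by `ev(v₁⊗v₁) = ev(v₂⊗v₂) = 0`,
`ev(v₁⊗v₂) = 1` and `ev(v₂⊗v₁) = −1`. -/
def evMap : (V2 ⊗[ℂ] V2) →ₗ[ℂ] ℂ :=
  TensorProduct.lift
    (LinearMap.mk₂ ℂ (fun v w => v 0 * w 1 - v 1 * w 0)
      (fun m₁ m₂ n => by simp only [Pi.add_apply]; ring)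
      (fun c m n => by simp only [Pi.smul_apply, smul_eq_mul]; ring)
      (fun m n₁ n₂ => by simp only [Pi.add_apply]; ring)
      (fun c m n => by simp only [Pi.smul_apply, smul_eq_mul]; ring))

/-- The coevaluation map `coev : ℂ → ℂ²⊗ℂ²`, `1 ↦ v₂⊗v₁ − v₁⊗v₂`. -/
def coevMap : ℂ →ₗ[ℂ] (V2 ⊗[ℂ] V2) :=
  LinearMap.toSpanSingleton ℂ (V2 ⊗[ℂ] V2) (bv 1 ⊗ₜ[ℂ] bv 0 - bv 0 ⊗ₜ[ℂ] bv 1)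

/-- The map `e : ℂ²⊗ℂ² → ℂ²⊗ℂ²` with `e(v₁⊗v₁) = e(v₂⊗v₂) = 0` and
`e(v₁⊗v₂) = e(v₂⊗v₁) = −(v₁⊗v₂ + v₂⊗v₁)`. -/
def eMap : (V2 ⊗[ℂ] V2) →ₗ[ℂ] (V2 ⊗[ℂ] V2) :=
  TensorProduct.lift
    (LinearMap.mk₂ ℂ
      (fun v w => (-(v 0 * w 1 + v 1 * w 0)) • (bv 0 ⊗ₜ[ℂ] bv 1 + bv 1 ⊗ₜ[ℂ] bv 0))
      (fun m₁ m₂ n => by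
        simp only [Pi.add_apply]
        rw [← add_smul]; ring_nf)
      (fun c m n => by
        simp only [Pi.smul_apply, smul_eq_mul]
        rw [smul_smul]; ring_nf)
      (fun m n₁ n₂ => by
        simp only [Pi.add_apply]
        rw [← add_smul]; ring_nf)
      (fun c m n => by
        simp only [Pi.smul_apply, smul_eq_mul]
        rw [smul_smul]; ring_nf))

/-- The operator `id^{⊗(m+1)} ⊗ (coev ∘ ev)` on `V^{⊗(m+3)} = TPow (m+2)`, acting by
`coev ∘ ev` on the last two tensor factors. -/
def idTensorCapcup (m : ℕ) : TPow (m + 2) →ₗ[ℂ] TPow (m + 2) :=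
  (TensorProduct.assoc ℂ (TPow m) V2 V2).symm.toLinearMap ∘ₗ
    TensorProduct.map LinearMap.id (coevMap ∘ₗ evMap) ∘ₗ
    (TensorProduct.assoc ℂ (TPow m) V2 V2).toLinearMap

/-- The dicyclic Jones–Wenzl projectors: `fproj m` is the endomorphism `f_{m+1}` of
`V^{⊗(m+1)} = TPow m`, defined recursively by `f₁ = id`, `f₂ = id + ½(coev∘ev + e)` and
`f_{j+1} = (f_j ⊗ id) + (f_j ⊗ id) ∘ (id^{⊗(j−1)} ⊗ (coev∘ev)) ∘ (f_j ⊗ id)` for `j ≥ 2`. -/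
def fproj : (m : ℕ) → (TPow m →ₗ[ℂ] TPow m)
  | 0 => LinearMap.id
  | 1 => LinearMap.id + (2⁻¹ : ℂ) • (coevMap ∘ₗ evMap + eMap)
  | (m + 2) =>
      TensorProduct.map (fproj (m + 1)) LinearMap.id +
        TensorProduct.map (fproj (m + 1)) LinearMap.id ∘ₗ idTensorCapcup m ∘ₗ
          TensorProduct.map (fproj (m + 1)) LinearMap.id

/-- The space `Hom_G(p, W)` of `G`-equivariant linear maps from a subrepresentation
`p ≤ W` to `W` (equivariance is expressed via the ambient action). -/
def homG {G W : Type*} [Group G] [AddCommGroup W] [Module ℂ W]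
    (ρ : Representation ℂ G W) (p : Submodule ℂ W) : Submodule ℂ (p →ₗ[ℂ] W) where
  carrier := {φ | ∀ (g : G) (w w' : p), ρ g (w : W) = (w' : W) → φ w' = ρ g (φ w)}
  add_mem' := by
    intro φ ψ hφ hψ g w w' h
    simp only [LinearMap.add_apply, hφ g w w' h, hψ g w w' h, map_add]
  zero_mem' := by
    intro g w w' h
    simp only [LinearMap.zero_apply, map_zero]
  smul_mem' := by
    intro c φ hφ g w w' h
    simp only [LinearMap.smul_apply, hφ g w w' h, LinearMap.map_smul]


/-! ### Auxiliary machinery -/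

section Aux

open Complex

@[simp] lemma bv_apply (s t : Fin 2) : bv s t = if t = s then 1 else 0 := by
  simp [bv, Pi.single_apply]

lemma v2_decomp (x : V2) : x 0 • bv 0 + x 1 • bv 1 = x := by
  funext i; fin_cases i <;> simp [bv, Pi.single_apply]

lemma ext_V2 {M : Type*} [AddCommGroup M] [Module ℂ M] {f g : V2 →ₗ[ℂ] M}
    (h0 : f (bv 0) = g (bv 0)) (h1 : f (bv 1) = g (bv 1)) : f = g := by
  refine LinearMap.ext fun x => ?_
  rw [← v2_decomp x]
  simp [h0, h1]

/-- coefficient functional: coefficient of `v_s^{⊗(m+1)}`. -/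
def cf (s : Fin 2) : (m : ℕ) → TPow m →ₗ[ℂ] ℂ
  | 0 => LinearMap.proj s
  | (m+1) => LinearMap.mul' ℂ ℂ ∘ₗ TensorProduct.map (cf s m) (LinearMap.proj s)

@[simp] lemma cf_zero_apply (s : Fin 2) (x : V2) : cf s 0 x = x s := rfl

@[simp] lemma cf_tmul (s : Fin 2) (m : ℕ) (x : TPow m) (v : V2) :
    cf s (m+1) (x ⊗ₜ[ℂ] v) = cf s m x * v s := rfl

lemma vpow_succ (s : Fin 2) (m : ℕ) : vpow s (m+1) = vpow s m ⊗ₜ[ℂ] bv s := rfl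

@[simp] lemma cf_vpow (s t : Fin 2) : ∀ m, cf s m (vpow t m) = if s = t then 1 else 0
  | 0 => by
    show (Pi.single t 1 : V2) s = _
    simp [Pi.single_apply, eq_comm]
  | (m+1) => by
    rw [vpow_succ, cf_tmul, cf_vpow s t m]
    by_cases h : s = t <;> simp [h, eq_comm]

/-- closed form of the dicyclic JW projector. -/
def dproj (m : ℕ) : TPow m →ₗ[ℂ] TPow m :=
  LinearMap.toSpanSingleton ℂ (TPow m) (vpow 0 m) ∘ₗ cf 0 m +
    LinearMap.toSpanSingleton ℂ (TPow m) (vpow 1 m) ∘ₗ cf 1 m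

lemma dproj_apply (m : ℕ) (x : TPow m) :
    dproj m x = cf 0 m x • vpow 0 m + cf 1 m x • vpow 1 m := rfl

@[simp] lemma dproj_vpow (m : ℕ) (s : Fin 2) : dproj m (vpow s m) = vpow s m := by
  fin_cases s <;> simp [dproj_apply]


@[simp] lemma evMap_tmul (x y : V2) : evMap (x ⊗ₜ[ℂ] y) = x 0 * y 1 - x 1 * y 0 := rfl

@[simp] lemma eMap_tmul (x y : V2) :
    eMap (x ⊗ₜ[ℂ] y) =
      (-(x 0 * y 1 + x 1 * y 0)) • (bv 0 ⊗ₜ[ℂ] bv 1 + bv 1 ⊗ₜ[ℂ] bv 0) := rfl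

@[simp] lemma coevMap_apply (c : ℂ) :
    coevMap c = c • (bv 1 ⊗ₜ[ℂ] bv 0 - bv 0 ⊗ₜ[ℂ] bv 1) := rfl

@[simp] lemma single_eq_bv (s : Fin 2) : (Pi.single s (1:ℂ) : V2) = bv s := rfl

lemma vpow_zero (s : Fin 2) : vpow s 0 = bv s := rfl

lemma cap_tmul (m : ℕ) (u : TPow m) (p q : V2) :
    idTensorCapcup m ((u ⊗ₜ[ℂ] p) ⊗ₜ[ℂ] q) =
      (p 0 * q 1 - p 1 * q 0) •
        ((u ⊗ₜ[ℂ] bv 1) ⊗ₜ[ℂ] bv 0 - (u ⊗ₜ[ℂ] bv 0) ⊗ₜ[ℂ] bv 1) := by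
  show (TensorProduct.assoc ℂ (TPow m) V2 V2).symm
      (TensorProduct.map LinearMap.id (coevMap ∘ₗ evMap)
        ((TensorProduct.assoc ℂ (TPow m) V2 V2) ((u ⊗ₜ[ℂ] p) ⊗ₜ[ℂ] q))) = _
  rw [TensorProduct.assoc_tmul, TensorProduct.map_tmul]
  simp only [LinearMap.id_coe, id_eq, LinearMap.comp_apply, evMap_tmul, coevMap_apply,
    TensorProduct.tmul_smul, TensorProduct.tmul_sub, LinearEquiv.map_smul, map_sub,
    TensorProduct.assoc_symm_tmul]
  module

def tmT {m : ℕ} (x : TPow m) (v : V2) : TPow (m+1) := x ⊗ₜ[ℂ] v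

def capT (m : ℕ) : TPow (m+1) ⊗[ℂ] V2 →ₗ[ℂ] TPow (m+1) ⊗[ℂ] V2 := idTensorCapcup m

lemma cf_tmT (s : Fin 2) (m : ℕ) (x : TPow m) (v : V2) :
    cf s (m+1) (tmT x v) = cf s m x * v s := rfl

lemma capT_vpow (m : ℕ) (s t : Fin 2) :
    capT m (vpow s (m+1) ⊗ₜ[ℂ] bv t) = (bv s 0 * bv t 1 - bv s 1 * bv t 0) •
      (tmT (vpow s m) (bv 1) ⊗ₜ[ℂ] bv 0 - tmT (vpow s m) (bv 0) ⊗ₜ[ℂ] bv 1) :=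
  cap_tmul m (vpow s m) (bv s) (bv t)

lemma capD (m : ℕ) (s t : Fin 2) :
    TensorProduct.map (dproj (m+1)) LinearMap.id (capT m (vpow s (m+1) ⊗ₜ[ℂ] bv t)) =
      (bv s 0 * bv t 1 - bv s 1 * bv t 0) •
        ((cf 1 m (vpow s m)) • (vpow 1 (m+1) ⊗ₜ[ℂ] bv 0) -
          (cf 0 m (vpow s m)) • (vpow 0 (m+1) ⊗ₜ[ℂ] bv 1)) := by
  rw [capT_vpow, map_smul, map_sub, TensorProduct.map_tmul, TensorProduct.map_tmul,
    LinearMap.id_apply, LinearMap.id_apply, dproj_apply, dproj_apply, cf_tmT, cf_tmT, cf_tmT,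
    cf_tmT]
  simp only [bv_apply, Fin.isValue, TensorProduct.add_tmul, TensorProduct.smul_tmul']
  norm_num

lemma fproj_eq_dproj : ∀ m, fproj m = dproj m
  | 0 => by
    refine LinearMap.ext fun x => ?_
    show x = cf 0 0 x • vpow 0 0 + cf 1 0 x • vpow 1 0
    exact (v2_decomp x).symm
  | 1 => by
    have key : ∀ i j : Fin 2,
        (bv i ⊗ₜ[ℂ] bv j : V2 ⊗[ℂ] V2) +
          (2⁻¹ : ℂ) • (coevMap (evMap (bv i ⊗ₜ[ℂ] bv j)) + eMap (bv i ⊗ₜ[ℂ] bv j)) =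
        (bv i 0 * bv j 0) • vpow 0 1 + (bv i 1 * bv j 1) • vpow 1 1 := by
      intro i j
      show (bv i ⊗ₜ[ℂ] bv j : V2 ⊗[ℂ] V2) +
          (2⁻¹ : ℂ) • (coevMap (evMap (bv i ⊗ₜ[ℂ] bv j)) + eMap (bv i ⊗ₜ[ℂ] bv j)) =
        (bv i 0 * bv j 0) • (bv 0 ⊗ₜ[ℂ] bv 0 : V2 ⊗[ℂ] V2) +
          (bv i 1 * bv j 1) • (bv 1 ⊗ₜ[ℂ] bv 1 : V2 ⊗[ℂ] V2)
      fin_cases i <;> fin_cases j <;>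
        (simp only [evMap_tmul, eMap_tmul, coevMap_apply, bv_apply, vpow_succ,
            vpow_zero, single_eq_bv, Fin.isValue]
         norm_num
         try module)
    show LinearMap.id + (2⁻¹ : ℂ) • (coevMap ∘ₗ evMap + eMap) = dproj 1
    apply TensorProduct.ext
    apply ext_V2 <;> apply ext_V2
    · exact key 0 0
    · exact key 0 1
    · exact key 1 0
    · exact key 1 1
  | (m+2) => by
    have ih := fproj_eq_dproj (m+1)
    show (TensorProduct.map (fproj (m + 1)) LinearMap.id +
        TensorProduct.map (fproj (m + 1)) LinearMap.id ∘ₗ idTensorCapcup m ∘ₗ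
          TensorProduct.map (fproj (m + 1)) LinearMap.id :
        TPow (m+2) →ₗ[ℂ] TPow (m+2)) = dproj (m+2)
    apply TensorProduct.ext'
    intro x v
    show fproj (m+1) x ⊗ₜ[ℂ] v +
        TensorProduct.map (fproj (m + 1)) LinearMap.id
          (capT m (fproj (m+1) x ⊗ₜ[ℂ] v)) =
      (cf 0 (m+1) x * v 0) • (vpow 0 (m+1) ⊗ₜ[ℂ] bv 0) +
        (cf 1 (m+1) x * v 1) • (vpow 1 (m+1) ⊗ₜ[ℂ] bv 1)
    rw [ih, dproj_apply (m+1) x]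
    obtain ⟨c0, c1, rfl⟩ : ∃ c0 c1, v = c0 • bv 0 + c1 • bv 1 :=
      ⟨v 0, v 1, (v2_decomp v).symm⟩
    simp only [TensorProduct.add_tmul, TensorProduct.tmul_add, ← TensorProduct.smul_tmul',
      TensorProduct.tmul_smul, map_add, map_smul, capD,
      cf_vpow, bv_apply, Pi.add_apply, Pi.smul_apply, smul_eq_mul]
    norm_num
    module

/-! ### Idempotence, nonzeroness, range -/

lemma dproj_idem (m : ℕ) : dproj m ∘ₗ dproj m = dproj m := by
  refine LinearMap.ext fun x => ?_
  rw [LinearMap.comp_apply, dproj_apply m x, map_add, LinearMap.map_smul,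
    LinearMap.map_smul, dproj_vpow, dproj_vpow]

lemma vpow_ne_zero (s : Fin 2) (m : ℕ) : vpow s m ≠ 0 := by
  intro h
  have h2 := cf_vpow s s m
  rw [h, map_zero] at h2
  simp at h2

lemma dproj_ne_zero (m : ℕ) : dproj m ≠ 0 := by
  intro h
  have h2 := dproj_vpow m 0
  rw [h] at h2
  exact vpow_ne_zero 0 m (by simpa using h2.symm)

lemma vpow_mem_Vsub (s : Fin 2) (m : ℕ) : vpow s m ∈ Vsub m := by
  apply Submodule.subset_span
  fin_cases s
  · exact Set.mem_insert _ _
  · exact Set.mem_insert_iff.2 (Or.inr rfl)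

lemma dproj_range (m : ℕ) : LinearMap.range (dproj m) = Vsub m := by
  apply le_antisymm
  · rintro y ⟨x, rfl⟩
    rw [dproj_apply]
    exact add_mem (Submodule.smul_mem _ _ (vpow_mem_Vsub 0 m))
      (Submodule.smul_mem _ _ (vpow_mem_Vsub 1 m))
  · rw [Vsub, Submodule.span_le]
    rintro y hy
    rcases hy with rfl | rfl
    · exact ⟨vpow 0 m, dproj_vpow m 0⟩
    · exact ⟨vpow 1 m, dproj_vpow m 1⟩

/-! ### Tensor powers of a single endomorphism -/

def Tpw (T : V2 →ₗ[ℂ] V2) : (m : ℕ) → TPow m →ₗ[ℂ] TPow m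
  | 0 => T
  | (m+1) => TensorProduct.map (Tpw T m) T

lemma Tpw_zero (T : V2 →ₗ[ℂ] V2) : Tpw T 0 = T := rfl

lemma Tpw_tmul (T : V2 →ₗ[ℂ] V2) (m : ℕ) (x : TPow m) (v : V2) :
    Tpw T (m+1) (x ⊗ₜ[ℂ] v) = Tpw T m x ⊗ₜ[ℂ] T v := rfl

lemma TPow_ext {m : ℕ} {M : Type*} [AddCommGroup M] [Module ℂ M]
    {f g : TPow (m+1) →ₗ[ℂ] M}
    (h : ∀ (x : TPow m) (v : V2), f (x ⊗ₜ[ℂ] v) = g (x ⊗ₜ[ℂ] v)) : f = g := by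
  apply TensorProduct.ext'
  exact h

lemma TPowRep_eq (G : Subgroup (GL (Fin 2) ℂ)) (g : G) :
    ∀ m, TPowRep G m g =
      Tpw (Matrix.toLin' ((g : GL (Fin 2) ℂ) : Matrix (Fin 2) (Fin 2) ℂ)) m
  | 0 => rfl
  | (m+1) => by
    show TensorProduct.map (TPowRep G m g) (stdRep G g) = _
    rw [TPowRep_eq G g m]
    rfl

lemma Tpw_comp (S T : V2 →ₗ[ℂ] V2) : ∀ m, Tpw (S ∘ₗ T) m = Tpw S m ∘ₗ Tpw T m
  | 0 => rfl
  | (m+1) => by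
    show TensorProduct.map (Tpw (S ∘ₗ T) m) (S ∘ₗ T)
        = TensorProduct.map (Tpw S m) S ∘ₗ TensorProduct.map (Tpw T m) T
    rw [Tpw_comp S T m, TensorProduct.map_comp]

lemma Tpw_id : ∀ m, Tpw LinearMap.id m = LinearMap.id
  | 0 => rfl
  | (m+1) => by
    show TensorProduct.map (Tpw LinearMap.id m) LinearMap.id = _
    rw [Tpw_id m]
    exact TensorProduct.map_id

/-! ### Commutation with the generators -/

section Gen

variable {T : V2 →ₗ[ℂ] V2}

-- X-type generator: T (bv 0) = bv 1, T (bv 1) = - bv 0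
lemma TX_apply (hT0 : T (bv 0) = bv 1) (hT1 : T (bv 1) = - bv 0) (v : V2) :
    T v = v 0 • bv 1 - v 1 • bv 0 := by
  conv_lhs => rw [← v2_decomp v]
  rw [map_add, LinearMap.map_smul, LinearMap.map_smul, hT0, hT1]
  module

lemma TX_apply0 (hT0 : T (bv 0) = bv 1) (hT1 : T (bv 1) = - bv 0) (v : V2) :
    (T v) 0 = - v 1 := by
  rw [TX_apply hT0 hT1 v]
  simp [bv_apply]

lemma TX_apply1 (hT0 : T (bv 0) = bv 1) (hT1 : T (bv 1) = - bv 0) (v : V2) :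
    (T v) 1 = v 0 := by
  rw [TX_apply hT0 hT1 v]
  simp [bv_apply]

lemma cf_TpwX (hT0 : T (bv 0) = bv 1) (hT1 : T (bv 1) = - bv 0) :
    ∀ m, cf 0 m ∘ₗ Tpw T m = ((-1 : ℂ)^(m+1)) • cf 1 m ∧
      cf 1 m ∘ₗ Tpw T m = cf 0 m
  | 0 => by
    constructor
    · refine LinearMap.ext fun (v : V2) => ?_
      show (T v) 0 = (-1 : ℂ)^(0+1) • (v 1)
      rw [TX_apply0 hT0 hT1]
      simp
    · refine LinearMap.ext fun v => ?_
      show (T v) 1 = v 0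
      exact TX_apply1 hT0 hT1 v
  | (m+1) => by
    obtain ⟨ih0, ih1⟩ := cf_TpwX hT0 hT1 m
    constructor <;> refine TPow_ext fun x v => ?_
    · erw [LinearMap.comp_apply, Tpw_tmul, cf_tmul, TX_apply0 hT0 hT1, LinearMap.smul_apply, cf_tmul]
      have h0 := LinearMap.congr_fun ih0 x
      rw [LinearMap.comp_apply] at h0
      rw [h0]
      simp only [LinearMap.smul_apply, cf_tmul, smul_eq_mul, pow_succ]
      ring
    · erw [LinearMap.comp_apply, Tpw_tmul, cf_tmul, TX_apply1 hT0 hT1]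
      have h1 := LinearMap.congr_fun ih1 x
      rw [LinearMap.comp_apply] at h1
      rw [h1, cf_tmul]

lemma Tpw_vpowX (hT0 : T (bv 0) = bv 1) (hT1 : T (bv 1) = - bv 0) :
    ∀ m, Tpw T m (vpow 0 m) = vpow 1 m ∧
      Tpw T m (vpow 1 m) = ((-1 : ℂ)^(m+1)) • vpow 0 m
  | 0 => by
    constructor
    · exact hT0
    · rw [zero_add, pow_one, neg_one_smul]; exact hT1
  | (m+1) => by
    obtain ⟨ih0, ih1⟩ := Tpw_vpowX hT0 hT1 m
    constructor
    · rw [vpow_succ, Tpw_tmul, ih0, hT0, ← vpow_succ]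
    · show Tpw T m (vpow 1 m) ⊗ₜ[ℂ] T (bv 1) =
          ((-1 : ℂ)^(m+1+1)) • (vpow 0 m ⊗ₜ[ℂ] bv 0 : TPow m ⊗[ℂ] V2)
      rw [ih1, hT1, TensorProduct.tmul_neg,
        ← TensorProduct.smul_tmul']
      module

lemma dproj_commX (hT0 : T (bv 0) = bv 1) (hT1 : T (bv 1) = - bv 0) (m : ℕ) :
    dproj m ∘ₗ Tpw T m = Tpw T m ∘ₗ dproj m := by
  refine LinearMap.ext fun x => ?_
  rw [LinearMap.comp_apply, LinearMap.comp_apply, dproj_apply m x,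
    dproj_apply m (Tpw T m x), map_add, LinearMap.map_smul, LinearMap.map_smul,
    (Tpw_vpowX hT0 hT1 m).1, (Tpw_vpowX hT0 hT1 m).2]
  have h0 := LinearMap.congr_fun (cf_TpwX hT0 hT1 m).1 x
  have h1 := LinearMap.congr_fun (cf_TpwX hT0 hT1 m).2 x
  rw [LinearMap.comp_apply] at h0 h1
  rw [h0, h1]
  simp only [LinearMap.smul_apply, smul_eq_mul]
  module

-- A-type generator: T (bv 0) = lam • bv 0, T (bv 1) = mu • bv 1
variable {lam mu : ℂ}

lemma TA_apply0 (hT0 : T (bv 0) = lam • bv 0) (hT1 : T (bv 1) = mu • bv 1) (v : V2) :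
    (T v) 0 = lam * v 0 := by
  have : T v = v 0 • (lam • bv 0) + v 1 • (mu • bv 1) := by
    conv_lhs => rw [← v2_decomp v]
    rw [map_add, LinearMap.map_smul, LinearMap.map_smul, hT0, hT1]
  rw [this]
  simp [bv_apply]
  ring

lemma TA_apply1 (hT0 : T (bv 0) = lam • bv 0) (hT1 : T (bv 1) = mu • bv 1) (v : V2) :
    (T v) 1 = mu * v 1 := by
  have : T v = v 0 • (lam • bv 0) + v 1 • (mu • bv 1) := by
    conv_lhs => rw [← v2_decomp v]
    rw [map_add, LinearMap.map_smul, LinearMap.map_smul, hT0, hT1]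
  rw [this]
  simp [bv_apply]
  ring

lemma cf_TpwA (hT0 : T (bv 0) = lam • bv 0) (hT1 : T (bv 1) = mu • bv 1) :
    ∀ m, cf 0 m ∘ₗ Tpw T m = (lam^(m+1)) • cf 0 m ∧
      cf 1 m ∘ₗ Tpw T m = (mu^(m+1)) • cf 1 m
  | 0 => by
    constructor
    · refine LinearMap.ext fun (v : V2) => ?_
      show (T v) 0 = lam^(0+1) • (v 0)
      rw [TA_apply0 hT0 hT1]
      simp
    · refine LinearMap.ext fun (v : V2) => ?_
      show (T v) 1 = mu^(0+1) • (v 1)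
      rw [TA_apply1 hT0 hT1]
      simp
  | (m+1) => by
    obtain ⟨ih0, ih1⟩ := cf_TpwA hT0 hT1 m
    constructor <;> refine TPow_ext fun x v => ?_
    · erw [LinearMap.comp_apply, Tpw_tmul, cf_tmul, TA_apply0 hT0 hT1, LinearMap.smul_apply, cf_tmul]
      have h0 := LinearMap.congr_fun ih0 x
      rw [LinearMap.comp_apply] at h0
      rw [h0]
      simp only [LinearMap.smul_apply, cf_tmul, smul_eq_mul, pow_succ]
      ring
    · erw [LinearMap.comp_apply, Tpw_tmul, cf_tmul, TA_apply1 hT0 hT1, LinearMap.smul_apply, cf_tmul]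
      have h1 := LinearMap.congr_fun ih1 x
      rw [LinearMap.comp_apply] at h1
      rw [h1]
      simp only [LinearMap.smul_apply, cf_tmul, smul_eq_mul, pow_succ]
      ring

lemma Tpw_vpowA (hT0 : T (bv 0) = lam • bv 0) (hT1 : T (bv 1) = mu • bv 1) :
    ∀ m, Tpw T m (vpow 0 m) = (lam^(m+1)) • vpow 0 m ∧
      Tpw T m (vpow 1 m) = (mu^(m+1)) • vpow 1 m
  | 0 => by
    constructor
    · rw [zero_add, pow_one]; exact hT0
    · rw [zero_add, pow_one]; exact hT1
  | (m+1) => by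
    obtain ⟨ih0, ih1⟩ := Tpw_vpowA hT0 hT1 m
    constructor
    · show Tpw T m (vpow 0 m) ⊗ₜ[ℂ] T (bv 0) =
          (lam^(m+1+1)) • (vpow 0 m ⊗ₜ[ℂ] bv 0 : TPow m ⊗[ℂ] V2)
      rw [ih0, hT0, TensorProduct.tmul_smul,
        ← TensorProduct.smul_tmul']
      module
    · show Tpw T m (vpow 1 m) ⊗ₜ[ℂ] T (bv 1) =
          (mu^(m+1+1)) • (vpow 1 m ⊗ₜ[ℂ] bv 1 : TPow m ⊗[ℂ] V2)
      rw [ih1, hT1, TensorProduct.tmul_smul,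
        ← TensorProduct.smul_tmul']
      module

lemma dproj_commA (hT0 : T (bv 0) = lam • bv 0) (hT1 : T (bv 1) = mu • bv 1) (m : ℕ) :
    dproj m ∘ₗ Tpw T m = Tpw T m ∘ₗ dproj m := by
  refine LinearMap.ext fun x => ?_
  rw [LinearMap.comp_apply, LinearMap.comp_apply, dproj_apply m x,
    dproj_apply m (Tpw T m x), map_add, LinearMap.map_smul, LinearMap.map_smul,
    (Tpw_vpowA hT0 hT1 m).1, (Tpw_vpowA hT0 hT1 m).2]
  have h0 := LinearMap.congr_fun (cf_TpwA hT0 hT1 m).1 x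
  have h1 := LinearMap.congr_fun (cf_TpwA hT0 hT1 m).2 x
  rw [LinearMap.comp_apply] at h0 h1
  rw [h0, h1]
  simp only [LinearMap.smul_apply, smul_eq_mul]
  module

end Gen

/-! ### toLin' on basis vectors -/

lemma toLin'_bv (M : Matrix (Fin 2) (Fin 2) ℂ) (s t : Fin 2) :
    (Matrix.toLin' M (bv s)) t = M t s := by
  rw [Matrix.toLin'_apply, bv]
  rw [Matrix.mulVec_single]
  simp

lemma toLin'_X0 : Matrix.toLin' !![0, -1; 1, 0] (bv 0) = bv (1 : Fin 2) := by
  funext t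
  rw [toLin'_bv]
  fin_cases t <;> simp [bv_apply]

lemma toLin'_X1 : Matrix.toLin' !![0, -1; 1, 0] (bv 1) = - bv (0 : Fin 2) := by
  funext t
  rw [show ((- bv (0:Fin 2)) t) = - (bv 0 t) from rfl, toLin'_bv]
  fin_cases t <;> simp [bv_apply]

lemma toLin'_A0 (z w : ℂ) : Matrix.toLin' !![z, 0; 0, w] (bv 0) = z • bv (0 : Fin 2) := by
  funext t
  rw [show ((z • bv (0:Fin 2)) t) = z * (bv 0 t) from rfl, toLin'_bv]
  fin_cases t <;> simp [bv_apply]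

lemma toLin'_A1 (z w : ℂ) : Matrix.toLin' !![z, 0; 0, w] (bv 1) = w • bv (1 : Fin 2) := by
  funext t
  rw [show ((w • bv (1:Fin 2)) t) = w * (bv 1 t) from rfl, toLin'_bv]
  fin_cases t <;> simp [bv_apply]


/-! ### Basis of the tensor power and weights -/

def ix : ℕ → Type
  | 0 => Fin 2
  | (m+1) => ix m × Fin 2

def ixDecEq : (m : ℕ) → DecidableEq (ix m)
  | 0 => inferInstanceAs (DecidableEq (Fin 2))
  | (m+1) => letI := ixDecEq m; inferInstanceAs (DecidableEq (ix m × Fin 2))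

attribute [instance] ixDecEq

def ixFintype : (m : ℕ) → Fintype (ix m)
  | 0 => inferInstanceAs (Fintype (Fin 2))
  | (m+1) => letI := ixFintype m; inferInstanceAs (Fintype (ix m × Fin 2))

attribute [instance] ixFintype

def basT : (m : ℕ) → Module.Basis (ix m) ℂ (TPow m)
  | 0 => Pi.basisFun ℂ (Fin 2)
  | (m+1) => Module.Basis.tensorProduct (basT m) (Pi.basisFun ℂ (Fin 2))

lemma basT_zero (s : Fin 2) : basT 0 s = bv s := by
  show Pi.basisFun ℂ (Fin 2) s = bv s
  rw [Pi.basisFun_apply]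
  rfl

lemma basT_succ (m : ℕ) (i : ix m) (s : Fin 2) :
    basT (m+1) (i, s) = basT m i ⊗ₜ[ℂ] bv s := by
  show Module.Basis.tensorProduct (basT m) (Pi.basisFun ℂ (Fin 2)) (i, s) = _
  rw [Module.Basis.tensorProduct_apply, Pi.basisFun_apply]
  rfl

def finz (s : Fin 2) : ℤ := (s : ℕ)

@[simp] lemma finz_zero : finz 0 = 0 := rfl
@[simp] lemma finz_one : finz 1 = 1 := rfl

def wtT : (m : ℕ) → ix m → ℤ
  | 0, s => 1 - 2 * finz s
  | (m+1), (i, s) => wtT m i + (1 - 2 * finz s)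

def kc (s : Fin 2) : (m : ℕ) → ix m
  | 0 => s
  | (m+1) => (kc s m, s)

lemma basT_kc (s : Fin 2) : ∀ m, basT m (kc s m) = vpow s m
  | 0 => by rw [show kc s 0 = s from rfl, basT_zero, vpow_zero]
  | (m+1) => by
    rw [show kc s (m+1) = (kc s m, s) from rfl, basT_succ, basT_kc s m, vpow_succ]

lemma wtT_le_zero : ∀ s : Fin 2, wtT 0 s ≤ 0 + 1 ∧ (wtT 0 s = 0 + 1 → s = kc 0 0) := by
  rw [Fin.forall_fin_two]
  constructor
  · exact ⟨by norm_num [wtT], fun _ => rfl⟩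
  · refine ⟨by norm_num [wtT], fun h => ?_⟩
    norm_num [wtT] at h

lemma wtT_le : ∀ m (i : ix m), wtT m i ≤ m + 1 ∧ (wtT m i = m + 1 → i = kc 0 m)
  | 0, s => wtT_le_zero s
  | (m+1), (i, s) => by
    obtain ⟨h1, h2⟩ := wtT_le m i
    have hs : (1 - 2 * finz s ≤ 1) ∧ (finz s = 0 → s = 0) := by
      revert s
      rw [Fin.forall_fin_two]
      constructor
      · exact ⟨by norm_num, fun _ => rfl⟩
      · refine ⟨by norm_num, fun h => ?_⟩
        norm_num at h
    have hw : wtT (m+1) (i, s) = wtT m i + (1 - 2 * finz s) := rfl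
    constructor
    · rw [hw]
      push_cast
      omega
    · intro h
      rw [hw] at h
      push_cast at h
      have hs2 : finz s = 0 := by
        have h1' : finz s ≤ 1 := by
          revert s
          rw [Fin.forall_fin_two]
          constructor <;> norm_num
        have h0 : (0 : ℤ) ≤ finz s := by
          revert s
          rw [Fin.forall_fin_two]
          constructor <;> norm_num
        omega
      have hs0 : s = 0 := hs.2 hs2
      subst hs0
      have hwi : wtT m i = (m : ℤ) + 1 := by push_cast at h ⊢; omega
      have hkc := h2 (by push_cast; omega)
      rw [show kc 0 (m+1) = (kc 0 m, 0) from rfl, hkc]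

/-! ### Eigenvalue decomposition for A-type generators -/

section Eig

variable {T : V2 →ₗ[ℂ] V2} {θ : ℝ}

lemma TA_bv (hT0 : T (bv 0) = Complex.exp (θ * Complex.I) • bv 0)
    (hT1 : T (bv 1) = Complex.exp (-(θ * Complex.I)) • bv 1) :
    ∀ s : Fin 2, T (bv s) = Complex.exp (((1 - 2 * finz s : ℤ) : ℂ) * (θ * Complex.I)) • bv s := by
  rw [Fin.forall_fin_two]
  constructor
  · rw [hT0]
    norm_num
  · rw [hT1, show (((1 - 2 * finz 1 : ℤ) : ℂ)) * (θ * Complex.I) = -(θ * Complex.I) by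
      norm_num]

lemma basT_eigA (hT0 : T (bv 0) = Complex.exp (θ * Complex.I) • bv 0)
    (hT1 : T (bv 1) = Complex.exp (-(θ * Complex.I)) • bv 1) :
    ∀ m (i : ix m), Tpw T m (basT m i) =
      Complex.exp ((wtT m i : ℂ) * (θ * Complex.I)) • basT m i
  | 0, s => by
    exact (congrArg T (basT_zero s)).trans ((TA_bv hT0 hT1 s).trans
      (congrArg (fun y : V2 => Complex.exp (((wtT 0 s : ℤ) : ℂ) * (θ * Complex.I)) • y)
        (basT_zero s).symm))
  | (m+1), (i, s) => by
    rw [basT_succ, Tpw_tmul, basT_eigA hT0 hT1 m i, TA_bv hT0 hT1 s,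
      TensorProduct.tmul_smul, ← TensorProduct.smul_tmul', smul_smul,
      ← Complex.exp_add, ← basT_succ]
    congr 2
    rw [show wtT (m+1) (i, s) = wtT m i + (1 - 2 * finz s) from rfl]
    push_cast
    ring

lemma exp_ne_exp (hθ : Irrational (θ / Real.pi)) {a b : ℤ} (h : a ≠ b) :
    Complex.exp ((a : ℂ) * (θ * Complex.I)) ≠ Complex.exp ((b : ℂ) * (θ * Complex.I)) := by
  intro he
  rw [Complex.exp_eq_exp_iff_exists_int] at he
  obtain ⟨n, hn⟩ := he
  have him : (a : ℝ) * θ = (b : ℝ) * θ + n * (2 * Real.pi) := by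
    have := congrArg Complex.im hn
    simpa [Complex.mul_im, Complex.add_im, Complex.mul_re] using this
  have hpi : Real.pi ≠ 0 := Real.pi_ne_zero
  have hab : (a : ℝ) - b ≠ 0 := by
    intro h'
    apply h
    have : (a : ℝ) = b := by linarith
    exact_mod_cast this
  apply hθ
  refine ⟨(2 * n) / (a - b), ?_⟩
  have hab' : ((a : ℚ) - b) ≠ 0 := by
    intro h'
    apply hab
    have : ((a : ℚ) : ℝ) - ((b : ℚ) : ℝ) = 0 := by
      push_cast at h' ⊢
      exact_mod_cast congrArg (fun q : ℚ => (q : ℝ)) h'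
    push_cast at this
    linarith
  push_cast
  rw [div_eq_iff]
  · field_simp
    nlinarith [him]
  · intro h'
    apply hab
    push_cast at h'
    linarith

lemma eigen_unique (hθ : Irrational (θ / Real.pi))
    (hT0 : T (bv 0) = Complex.exp (θ * Complex.I) • bv 0)
    (hT1 : T (bv 1) = Complex.exp (-(θ * Complex.I)) • bv 1)
    (m : ℕ) {y : TPow m}
    (hy : Tpw T m y = Complex.exp (((m : ℂ) + 1) * (θ * Complex.I)) • y) :
    ∃ c : ℂ, y = c • vpow 0 m := by
  have hrep : ∀ i : ix m, i ≠ kc 0 m → (basT m).repr y i = 0 := by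
    intro i hi
    have hco : (basT m).coord i ∘ₗ Tpw T m =
        Complex.exp ((wtT m i : ℂ) * (θ * Complex.I)) • (basT m).coord i := by
      refine (basT m).ext fun j => ?_
      rw [LinearMap.comp_apply, basT_eigA hT0 hT1 m j, LinearMap.map_smul,
        LinearMap.smul_apply]
      by_cases hji : j = i
      · subst hji; rfl
      · simp [Module.Basis.coord_apply, Module.Basis.repr_self, Finsupp.single_apply, hji]
    have h1 := LinearMap.congr_fun hco y
    rw [LinearMap.comp_apply, hy, LinearMap.map_smul, LinearMap.smul_apply] at h1
    rw [Module.Basis.coord_apply] at h1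
    have hwt : wtT m i ≠ (m : ℤ) + 1 := fun hw => hi ((wtT_le m i).2 (by exact_mod_cast hw))
    have hne : Complex.exp (((m : ℂ) + 1) * (θ * Complex.I)) ≠
        Complex.exp ((wtT m i : ℂ) * (θ * Complex.I)) := by
      have := exp_ne_exp hθ (a := (m : ℤ) + 1) (b := wtT m i) (fun hc => hwt hc.symm)
      convert this using 3
      push_cast
      ring
    by_contra hne0
    exact hne (mul_right_cancel₀ hne0 (by simpa [smul_eq_mul] using h1))
  refine ⟨(basT m).repr y (kc 0 m), ?_⟩
  have hsum := (basT m).sum_repr y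
  conv_lhs => rw [← hsum]
  rw [Finset.sum_eq_single (kc 0 m)]
  · rw [basT_kc]
  · intro i _ hi
    rw [hrep i hi, zero_smul]
  · intro h
    exact absurd (Finset.mem_univ _) h

end Eig


end Aux

/-- For every `j ≥ 1` (here `j = m+1`): the dicyclic Jones–Wenzl projector `f_j` is a
nonzero idempotent, is `Dic∞`-equivariant, its image is exactly the subspace `V_j` spanned
by `v₁^{⊗j}` and `v₂^{⊗j}`, and the simple representation `V_j` occurs in `V^{⊗j}` with
multiplicity one, i.e. `dim_ℂ Hom_{Dic∞}(V_j, V^{⊗j}) = 1`. -/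
theorem fproj_idempotent_equivariant_range_multiplicityOne
    (θ : ℝ) (hθ : Irrational (θ / Real.pi)) (X A : GL (Fin 2) ℂ)
    (hX : (X : Matrix (Fin 2) (Fin 2) ℂ) = !![0, -1; 1, 0])
    (hA : (A : Matrix (Fin 2) (Fin 2) ℂ) =
      !![Complex.exp (θ * Complex.I), 0; 0, Complex.exp (-(θ * Complex.I))])
    (G : Subgroup (GL (Fin 2) ℂ)) (hG : G = Subgroup.closure {X, A}) :
    ∀ m : ℕ,
      fproj m ∘ₗ fproj m = fproj m ∧
      fproj m ≠ 0 ∧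
      (∀ g : G, fproj m ∘ₗ TPowRep G m g = TPowRep G m g ∘ₗ fproj m) ∧
      LinearMap.range (fproj m) = Vsub m ∧
      Module.finrank ℂ (homG (TPowRep G m) (Vsub m)) = 1 := by
  intro m
  have hfd := fproj_eq_dproj m
  have hXmem : X ∈ G := hG ▸ Subgroup.subset_closure (Set.mem_insert _ _)
  have hAmem : A ∈ G := hG ▸ Subgroup.subset_closure
    (Set.mem_insert_iff.2 (Or.inr rfl))
  have hX0 : Matrix.toLin' ((X : GL (Fin 2) ℂ) : Matrix (Fin 2) (Fin 2) ℂ) (bv 0) = bv 1 := by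
    rw [hX]; exact toLin'_X0
  have hX1 : Matrix.toLin' ((X : GL (Fin 2) ℂ) : Matrix (Fin 2) (Fin 2) ℂ) (bv 1) = - bv 0 := by
    rw [hX]; exact toLin'_X1
  have hA0 : Matrix.toLin' ((A : GL (Fin 2) ℂ) : Matrix (Fin 2) (Fin 2) ℂ) (bv 0)
      = Complex.exp (θ * Complex.I) • bv 0 := by
    rw [hA]; exact toLin'_A0 _ _
  have hA1 : Matrix.toLin' ((A : GL (Fin 2) ℂ) : Matrix (Fin 2) (Fin 2) ℂ) (bv 1)
      = Complex.exp (-(θ * Complex.I)) • bv 1 := by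
    rw [hA]; exact toLin'_A1 _ _
  refine ⟨?_, ?_, ?_, ?_, ?_⟩
  · rw [hfd]; exact dproj_idem m
  · rw [hfd]; exact dproj_ne_zero m
  · have key : ∀ u ∈ Subgroup.closure ({X, A} : Set (GL (Fin 2) ℂ)),
        dproj m ∘ₗ Tpw (Matrix.toLin' (Units.val u)) m
          = Tpw (Matrix.toLin' (Units.val u)) m ∘ₗ dproj m := by
      intro u hu
      induction hu using Subgroup.closure_induction with
      | mem u hu =>
        rcases Set.mem_insert_iff.1 hu with rfl | hu
        · exact dproj_commX hX0 hX1 m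
        · rw [Set.mem_singleton_iff.1 hu]
          exact dproj_commA hA0 hA1 m
      | one =>
        rw [show Units.val (1 : GL (Fin 2) ℂ) = 1 from Units.val_one,
          Matrix.toLin'_one, Tpw_id]
        rw [LinearMap.comp_id, LinearMap.id_comp]
      | mul u v _ _ ihu ihv =>
        rw [show Units.val (u * v) = Units.val u * Units.val v from Units.val_mul u v,
          Matrix.toLin'_mul, Tpw_comp]
        calc dproj m ∘ₗ (Tpw (Matrix.toLin' (Units.val u)) m
              ∘ₗ Tpw (Matrix.toLin' (Units.val v)) m)
            = (dproj m ∘ₗ Tpw (Matrix.toLin' (Units.val u)) m)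
              ∘ₗ Tpw (Matrix.toLin' (Units.val v)) m := by
              rw [LinearMap.comp_assoc]
          _ = Tpw (Matrix.toLin' (Units.val u)) m
              ∘ₗ (dproj m ∘ₗ Tpw (Matrix.toLin' (Units.val v)) m) := by
              rw [ihu, LinearMap.comp_assoc]
          _ = _ := by rw [ihv, ← LinearMap.comp_assoc]
      | inv u _ ihu =>
        have h1 : Tpw (Matrix.toLin' (Units.val u)) m
            ∘ₗ Tpw (Matrix.toLin' (Units.val u⁻¹)) m = LinearMap.id := by
          rw [← Tpw_comp, ← Matrix.toLin'_mul, ← Units.val_mul, mul_inv_cancel,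
            Units.val_one, Matrix.toLin'_one, Tpw_id]
        have h2 : Tpw (Matrix.toLin' (Units.val u⁻¹)) m
            ∘ₗ Tpw (Matrix.toLin' (Units.val u)) m = LinearMap.id := by
          rw [← Tpw_comp, ← Matrix.toLin'_mul, ← Units.val_mul, inv_mul_cancel,
            Units.val_one, Matrix.toLin'_one, Tpw_id]
        refine LinearMap.ext fun x => ?_
        have e1 := LinearMap.congr_fun ihu
          (Tpw (Matrix.toLin' (Units.val u⁻¹)) m x)
        rw [LinearMap.comp_apply, LinearMap.comp_apply,
          ← LinearMap.comp_apply (Tpw (Matrix.toLin' (Units.val u)) m), h1,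
          LinearMap.id_apply] at e1
        have e2 := congrArg (Tpw (Matrix.toLin' (Units.val u⁻¹)) m) e1
        rw [← LinearMap.comp_apply (Tpw (Matrix.toLin' (Units.val u⁻¹)) m)
          (Tpw (Matrix.toLin' (Units.val u)) m), h2,
          LinearMap.id_apply] at e2
        rw [LinearMap.comp_apply, LinearMap.comp_apply, e2]
    intro g
    rw [hfd, TPowRep_eq G g m]
    have hmem : (g : GL (Fin 2) ℂ) ∈ Subgroup.closure ({X, A} : Set (GL (Fin 2) ℂ)) := by
      rw [← hG]; exact g.2
    exact key _ hmem
  · rw [hfd]; exact dproj_range m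
  · have h01 : vpow 0 m ∈ Vsub m := vpow_mem_Vsub 0 m
    have h11 : vpow 1 m ∈ Vsub m := vpow_mem_Vsub 1 m
    have hsub_ne : (Vsub m).subtype ≠ 0 := by
      intro h
      apply vpow_ne_zero 0 m
      have := LinearMap.congr_fun h (⟨vpow 0 m, h01⟩ : Vsub m)
      simpa using this
    have heq : homG (TPowRep G m) (Vsub m) = Submodule.span ℂ {(Vsub m).subtype} := by
      apply le_antisymm
      · intro φ hφ
        have hφ' : ∀ (g : G) (w w' : Vsub m),
            TPowRep G m g (w : TPow m) = (w' : TPow m) →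
              φ w' = TPowRep G m g (φ w) := hφ
        set gA : G := ⟨A, hAmem⟩
        set gX : G := ⟨X, hXmem⟩
        have hρA : TPowRep G m gA =
            Tpw (Matrix.toLin' ((A : GL (Fin 2) ℂ) : Matrix (Fin 2) (Fin 2) ℂ)) m :=
          TPowRep_eq G gA m
        have hρX : TPowRep G m gX =
            Tpw (Matrix.toLin' ((X : GL (Fin 2) ℂ) : Matrix (Fin 2) (Fin 2) ℂ)) m :=
          TPowRep_eq G gX m
        have hAw0 : TPowRep G m gA (vpow 0 m)
            = (Complex.exp (θ * Complex.I))^(m+1) • vpow 0 m := by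
          rw [hρA]; exact (Tpw_vpowA hA0 hA1 m).1
        have hstep := hφ' gA ⟨vpow 0 m, h01⟩
          ((Complex.exp (θ * Complex.I))^(m+1) • ⟨vpow 0 m, h01⟩)
          (by rw [Submodule.coe_smul]; exact hAw0)
        rw [_root_.map_smul] at hstep
        have heig : Tpw (Matrix.toLin' ((A : GL (Fin 2) ℂ) : Matrix (Fin 2) (Fin 2) ℂ)) m
            (φ ⟨vpow 0 m, h01⟩)
            = Complex.exp (((m : ℂ) + 1) * (θ * Complex.I)) • φ ⟨vpow 0 m, h01⟩ := by
          rw [← hρA, ← hstep]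
          rw [show Complex.exp (((m : ℂ) + 1) * (θ * Complex.I))
              = (Complex.exp (θ * Complex.I))^(m+1) by
            rw [← Complex.exp_nat_mul]
            push_cast
            ring_nf]
        obtain ⟨c, hc⟩ := eigen_unique hθ hA0 hA1 m heig
        have hXw0 : TPowRep G m gX (vpow 0 m) = vpow 1 m := by
          rw [hρX]; exact (Tpw_vpowX hX0 hX1 m).1
        have hφ1 : φ ⟨vpow 1 m, h11⟩ = TPowRep G m gX (φ ⟨vpow 0 m, h01⟩) :=
          hφ' gX ⟨vpow 0 m, h01⟩ ⟨vpow 1 m, h11⟩ hXw0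
        have hφ1' : φ ⟨vpow 1 m, h11⟩ = c • vpow 1 m := by
          rw [hφ1, hc, _root_.map_smul, hρX, (Tpw_vpowX hX0 hX1 m).1]
        refine Submodule.mem_span_singleton.2 ⟨c, ?_⟩
        refine LinearMap.ext fun w => ?_
        rcases w with ⟨x, hx⟩
        obtain ⟨a, b, hab⟩ := Submodule.mem_span_pair.1 hx
        have hw : (⟨x, hx⟩ : Vsub m) = a • (⟨vpow 0 m, h01⟩ : Vsub m)
            + b • (⟨vpow 1 m, h11⟩ : Vsub m) := by
          apply Subtype.ext
          simpa using hab.symm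
        rw [hw]
        simp only [map_add, _root_.map_smul, LinearMap.smul_apply,
          Submodule.subtype_apply, hc, hφ1']
        try module
      · rw [Submodule.span_singleton_le_iff_mem]
        exact fun g w w' h => by
          rw [Submodule.subtype_apply, Submodule.subtype_apply, ← h]
    rw [heq]
    exact finrank_span_singleton hsub_ne
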